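/- arXiv:2205.08546 — 2 statements merged into one kernel-verified Lean document; each statement's English description precedes it below -/
import Mathlib

section
/- Let M be a rank-1 projective measurement assemblage in dimension d with m settings (so o = d outcomes), with the uniform weighting p x = 1/m, and define the state assemblage σ x a = (1/d)•(M x a)ᵀ (transposition in the computational basis). Let T(M) be the maximum over deterministic labelings λ : Fin m → Fin d of ‖∑ x, M x (λ x)‖_∞. Then σ is a state assemblage and its steerability satisfies S(σ,p) ≥ 1 − T(M)/m. -/
open Matrix Kronecker BigOperators ComplexOrder

noncomputable section

def IsDensityMatrix {n : Type*} [Fintype n] [DecidableEq n] (ρ : Matrix n n ℂ) : Prop :=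
  ρ.PosSemidef ∧ ρ.trace = 1

noncomputable def traceNorm {n : Type*} [Fintype n] [DecidableEq n] (X : Matrix n n ℂ) : ℝ :=
  (((Matrix.posSemidef_conjTranspose_mul_self X).1.eigenvectorUnitary.1 *
      diagonal (((↑) : ℝ → ℂ) ∘ Real.sqrt ∘ (Matrix.posSemidef_conjTranspose_mul_self X).1.eigenvalues) *
      (star (Matrix.posSemidef_conjTranspose_mul_self X).1.eigenvectorUnitary : Matrix n n ℂ)).trace).re

noncomputable def specNorm {n : Type*} [Fintype n] [DecidableEq n] (X : Matrix n n ℂ) : ℝ :=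
  ‖Matrix.toEuclideanCLM (𝕜 := ℂ) X‖

def ptrace1 {n e : Type*} [Fintype n] (ρ : Matrix (n × e) (n × e) ℂ) : Matrix e e ℂ :=
  Matrix.of fun j j' => ∑ i, ρ (i, j) (i, j')

def IsAssemblage {d m o : ℕ} (M : Fin m → Fin o → Matrix (Fin d) (Fin d) ℂ) : Prop :=
  (∀ x a, (M x a).PosSemidef) ∧ ∀ x, ∑ a, M x a = 1

def IsWeighting {m : ℕ} (p : Fin m → ℝ) : Prop :=
  (∀ x, 0 < p x) ∧ ∑ x, p x = 1

noncomputable def Ddiamond {d m o : ℕ} (p : Fin m → ℝ)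
    (M N : Fin m → Fin o → Matrix (Fin d) (Fin d) ℂ) : ℝ :=
  (1 / 2) * ∑ x, p x *
    ⨆ ρ : {ρ : Matrix (Fin d × Fin d) (Fin d × Fin d) ℂ // IsDensityMatrix ρ},
      ∑ a, traceNorm (ptrace1 (((M x a - N x a) ⊗ₖ (1 : Matrix (Fin d) (Fin d) ℂ)) * ρ.1))

def JointlyMeasurable {d m o : ℕ} (F : Fin m → Fin o → Matrix (Fin d) (Fin d) ℂ) : Prop :=
  ∃ G : (Fin m → Fin o) → Matrix (Fin d) (Fin d) ℂ,
    (∀ lam, (G lam).PosSemidef) ∧ (∑ lam, G lam = 1) ∧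
    ∀ x a, F x a = ∑ lam ∈ Finset.univ.filter (fun lam => lam x = a), G lam

noncomputable def Incomp {d m o : ℕ} (p : Fin m → ℝ)
    (M : Fin m → Fin o → Matrix (Fin d) (Fin d) ℂ) : ℝ :=
  ⨅ F : {F : Fin m → Fin o → Matrix (Fin d) (Fin d) ℂ // IsAssemblage F ∧ JointlyMeasurable F},
    Ddiamond p M F.1


def IsStateAssemblage {d m o : ℕ} (σ : Fin m → Fin o → Matrix (Fin d) (Fin d) ℂ) : Prop :=
  (∀ x a, (σ x a).PosSemidef) ∧ ∀ x, ∑ a, (σ x a).trace = 1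

def HasLHSModel {d m o : ℕ} (σ : Fin m → Fin o → Matrix (Fin d) (Fin d) ℂ) : Prop :=
  ∃ σ' : (Fin m → Fin o) → Matrix (Fin d) (Fin d) ℂ,
    (∀ lam, (σ' lam).PosSemidef) ∧ (∑ lam, (σ' lam).trace = 1) ∧
    ∀ x a, σ x a = ∑ lam ∈ Finset.univ.filter (fun lam => lam x = a), σ' lam

noncomputable def Steerability {d m o : ℕ} (p : Fin m → ℝ)
    (σ : Fin m → Fin o → Matrix (Fin d) (Fin d) ℂ) : ℝ :=
  ⨅ τ : {τ : Fin m → Fin o → Matrix (Fin d) (Fin d) ℂ // IsStateAssemblage τ ∧ HasLHSModel τ},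
    (1 / 2) * ∑ x, p x * ∑ a, traceNorm (σ x a - τ.1 x a)

def IsRankOneProjective {d m : ℕ} (M : Fin m → Fin d → Matrix (Fin d) (Fin d) ℂ) : Prop :=
  ∀ x a, (M x a).IsHermitian ∧ M x a * M x a = M x a ∧ (M x a).trace = 1


section MainHelpers
variable {n : Type*} [Fintype n] [DecidableEq n]

variable {n : Type*} [Fintype n] [DecidableEq n]

lemma trace_conj_unitary (U : Matrix n n ℂ) (hU : star U * U = 1) (D : Matrix n n ℂ) :
    (U * D * star U).trace = D.trace := by
  rw [trace_mul_comm, ← mul_assoc, hU, one_mul]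

lemma conj_mul_conj (U A B : Matrix n n ℂ) (hU : star U * U = 1) :
    (U * A * star U) * (U * B * star U) = U * (A * B) * star U := by
  rw [mul_assoc (U * A), ← mul_assoc (star U) (U * B), ← mul_assoc (star U) U, hU, one_mul,
    ← mul_assoc, mul_assoc U A B, ← mul_assoc]

lemma traceNorm_of_hermitian' {X : Matrix n n ℂ} (hX : X.IsHermitian) :
    traceNorm X = ∑ i, |hX.eigenvalues i| := by
  have hH := (Matrix.posSemidef_conjTranspose_mul_self X).1
  have e : traceNorm X = ((cfc Real.sqrt (Xᴴ * X)).trace).re := by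
    rw [hH.cfc_eq]; rfl
  have h2 : Xᴴ * X = cfc (fun x : ℝ => x ^ 2) X := by
    rw [cfc_pow_id (R := ℝ) X 2 (show IsSelfAdjoint X from hX), hX.eq, pow_two]
  have hU : star (hX.eigenvectorUnitary : Matrix n n ℂ) * hX.eigenvectorUnitary = 1 :=
    (Matrix.mem_unitaryGroup_iff').mp hX.eigenvectorUnitary.2
  rw [e, h2, ← cfc_comp' Real.sqrt (fun x : ℝ => x ^ 2) X (ha := show IsSelfAdjoint X from hX), hX.cfc_eq, IsHermitian.cfc,
    Unitary.conjStarAlgAut_apply, trace_conj_unitary _ hU, trace_diagonal, Complex.re_sum]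
  simp [Real.sqrt_sq_eq_abs]

lemma posSemidef_diag_nonneg {A : Matrix n n ℂ} (hA : A.PosSemidef) (i : n) : 0 ≤ A i i := by
  exact hA.diag_nonneg

lemma trace_re_nonneg {A : Matrix n n ℂ} (hA : A.PosSemidef) : 0 ≤ (A.trace).re := by
  have h : A.trace = ∑ i, A i i := by simp [Matrix.trace, Matrix.diag]
  rw [h, Complex.re_sum]
  exact Finset.sum_nonneg fun i _ => (Complex.nonneg_iff.mp (posSemidef_diag_nonneg hA i)).1

lemma key1 {P X : Matrix n n ℂ} (hP : P.PosSemidef) (hP1 : (1 - P).PosSemidef)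
    (hX : X.IsHermitian) :
    2 * ((P * X).trace).re ≤ traceNorm X + (X.trace).re := by
  set U : Matrix n n ℂ := (hX.eigenvectorUnitary : Matrix n n ℂ) with hUdef
  have hU : star U * U = 1 := (Matrix.mem_unitaryGroup_iff').mp hX.eigenvectorUnitary.2
  set g := hX.eigenvalues with hgdef
  set Q : Matrix n n ℂ := star U * P * U with hQdef
  have hQ : Q.PosSemidef := by
    have := hP.conjTranspose_mul_mul_same U
    exact this
  have hQ1 : (1 - Q).PosSemidef := by
    have := hP1.conjTranspose_mul_mul_same U
    have h1 : Uᴴ * (1 - P) * U = 1 - Q := by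
      rw [mul_sub, sub_mul, mul_one, hQdef, star_eq_conjTranspose]
      congr 1
    rwa [h1] at this
  have htr : (P * X).trace = ∑ i, Q i i * (g i : ℂ) := by
    have e1 : P * X = P * U * diagonal (RCLike.ofReal ∘ g) * star U := by
      conv_lhs => rw [hX.spectral_theorem, Unitary.conjStarAlgAut_apply]
      simp only [hUdef, hgdef, mul_assoc]
    rw [e1, trace_mul_comm]
    have e2 : star U * (P * U * diagonal (RCLike.ofReal ∘ g))
        = Q * diagonal (RCLike.ofReal ∘ g) := by
      simp only [hQdef, mul_assoc]
    rw [e2]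
    simp [Matrix.trace, Matrix.diag, Matrix.mul_diagonal, Function.comp]
  have htrX : (X.trace) = ∑ i, (g i : ℂ) := by
    conv_lhs => rw [hX.spectral_theorem, Unitary.conjStarAlgAut_apply]
    rw [trace_conj_unitary U hU, trace_diagonal]
    simp [Function.comp, hgdef]
  have hq0 : ∀ i, 0 ≤ (Q i i).re := fun i => (Complex.nonneg_iff.mp (posSemidef_diag_nonneg hQ i)).1
  have hq1 : ∀ i, (Q i i).re ≤ 1 := by
    intro i
    have := (Complex.nonneg_iff.mp (posSemidef_diag_nonneg hQ1 i)).1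
    simp only [Matrix.sub_apply, Matrix.one_apply_eq, Complex.sub_re, Complex.one_re] at this
    linarith
  rw [htr, traceNorm_of_hermitian' hX, htrX]
  rw [Complex.re_sum, Complex.re_sum, ← hgdef, ← Finset.sum_add_distrib, mul_comm,
    Finset.sum_mul]
  apply Finset.sum_le_sum
  intro i _
  have h1 : (Q i i * (g i : ℂ)).re = (Q i i).re * g i := by
    simp [Complex.mul_re]
  have h2 : ((g i : ℂ)).re = g i := rfl
  rw [h1, h2]
  rcases abs_cases (g i) with ⟨h, h'⟩ | ⟨h, h'⟩ <;> nlinarith [hq0 i, hq1 i]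


lemma quad_form_le_specNorm (A : Matrix n n ℂ) (v : n → ℂ) (hv : ∑ j, star (v j) * v j = 1) :
    (∑ j, star (v j) * (A *ᵥ v) j).re ≤ specNorm A := by
  set w : EuclideanSpace ℂ n := (WithLp.equiv 2 (n → ℂ)).symm v with hw
  have hip : (inner ℂ w ((Matrix.toEuclideanCLM (𝕜 := ℂ) A) w) : ℂ)
      = ∑ j, star (v j) * (A *ᵥ v) j := by
    rw [hw, WithLp.equiv_symm_apply, Matrix.toEuclideanCLM_toLp, PiLp.inner_apply]
    simp only [RCLike.inner_apply', starRingEnd_apply]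
  have hnw : ‖w‖ ^ 2 = 1 := by
    have : (inner ℂ w w : ℂ) = 1 := by
      rw [hw, PiLp.inner_apply]
      simp only [RCLike.inner_apply', starRingEnd_apply]
      exact hv
    have h2 := inner_self_eq_norm_sq (𝕜 := ℂ) w
    rw [this] at h2
    simpa using h2.symm
  have hnw1 : ‖w‖ ≤ 1 := by nlinarith [norm_nonneg w]
  calc (∑ j, star (v j) * (A *ᵥ v) j).re
      = (inner ℂ w ((Matrix.toEuclideanCLM (𝕜 := ℂ) A) w) : ℂ).re := by rw [hip]
    _ ≤ ‖(inner ℂ w ((Matrix.toEuclideanCLM (𝕜 := ℂ) A) w) : ℂ)‖ := Complex.re_le_norm _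
    _ ≤ ‖w‖ * ‖(Matrix.toEuclideanCLM (𝕜 := ℂ) A) w‖ := norm_inner_le_norm _ _
    _ ≤ ‖w‖ * (specNorm A * ‖w‖) := by
        apply mul_le_mul_of_nonneg_left (ContinuousLinearMap.le_opNorm _ _) (norm_nonneg w)
    _ = specNorm A * ‖w‖ ^ 2 := by ring
    _ = specNorm A := by rw [hnw, mul_one]

lemma trace_mul_eig {P X : Matrix n n ℂ} (hX : X.IsHermitian) :
    (P * X).trace = ∑ i, ((star (hX.eigenvectorUnitary : Matrix n n ℂ) * P *
      (hX.eigenvectorUnitary : Matrix n n ℂ)) i i) * ((hX.eigenvalues i : ℂ)) := by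
  set U : Matrix n n ℂ := (hX.eigenvectorUnitary : Matrix n n ℂ) with hUdef
  set g := hX.eigenvalues with hgdef
  have e1 : P * X = P * U * diagonal (RCLike.ofReal ∘ g) * star U := by
    conv_lhs => rw [hX.spectral_theorem, Unitary.conjStarAlgAut_apply]
    simp only [hUdef, hgdef, mul_assoc]
  rw [e1, trace_mul_comm]
  have e2 : star U * (P * U * diagonal (RCLike.ofReal ∘ g))
      = (star U * P * U) * diagonal (RCLike.ofReal ∘ g) := by
    simp only [mul_assoc]
  rw [e2]
  simp [Matrix.trace, Matrix.diag, Matrix.mul_diagonal, Function.comp]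

lemma key2 (A : Matrix n n ℂ) {ρ : Matrix n n ℂ} (hρ : ρ.PosSemidef) :
    ((A * ρ).trace).re ≤ specNorm A * (ρ.trace).re := by
  set V : Matrix n n ℂ := (hρ.1.eigenvectorUnitary : Matrix n n ℂ) with hVdef
  have hV : star V * V = 1 := (Matrix.mem_unitaryGroup_iff').mp hρ.1.eigenvectorUnitary.2
  set e := hρ.1.eigenvalues with hedef
  have he : ∀ i, 0 ≤ e i := hρ.eigenvalues_nonneg
  have htrρ : ρ.trace = ∑ i, (e i : ℂ) := by
    have := trace_mul_eig (P := (1 : Matrix n n ℂ)) hρ.1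
    rw [one_mul] at this
    rw [this, ← hVdef, ← hedef]
    apply Finset.sum_congr rfl
    intro i _
    rw [mul_one, hV]
    simp
  rw [trace_mul_eig hρ.1, htrρ, Complex.re_sum, Complex.re_sum, ← hVdef, ← hedef]
  have hbound : ∀ i, ((star V * A * V) i i).re ≤ specNorm A := by
    intro i
    have hv : ∑ j, star (V j i) * V j i = 1 := by
      have : (star V * V) i i = 1 := by rw [hV]; simp
      simpa [Matrix.mul_apply, Matrix.star_apply] using this
    have hq := quad_form_le_specNorm A (fun j => V j i) hv
    have heq : (star V * A * V) i i = ∑ j, star (V j i) * (A *ᵥ (fun j => V j i)) j := by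
      simp only [Matrix.mul_apply, Matrix.star_apply, Matrix.mulVec, dotProduct,
        Finset.sum_mul, Finset.mul_sum]
      rw [Finset.sum_comm]
      exact Finset.sum_congr rfl fun j _ => Finset.sum_congr rfl fun k _ => (mul_assoc _ _ _)
    rw [heq]
    exact hq
  calc ∑ i, ((star V * A * V) i i * (e i : ℂ)).re
      = ∑ i, ((star V * A * V) i i).re * e i := by
        apply Finset.sum_congr rfl; intro i _; simp [Complex.mul_re]
    _ ≤ ∑ i, specNorm A * e i :=
        Finset.sum_le_sum fun i _ => mul_le_mul_of_nonneg_right (hbound i) (he i)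
    _ = specNorm A * ∑ i, ((e i : ℂ)).re := by rw [Finset.mul_sum]; rfl

lemma posSemidef_smul_real {A : Matrix n n ℂ} (hA : A.PosSemidef) {r : ℝ} (hr : 0 ≤ r) :
    (r • A).PosSemidef := by
  refine Matrix.PosSemidef.of_dotProduct_mulVec_nonneg ?_ ?_
  · unfold Matrix.IsHermitian
    ext i j
    have h2 : star (A j i) = A i j := congrFun (congrFun hA.1 i) j
    show star ((r • A) j i) = (r • A) i j
    rw [Matrix.smul_apply, Matrix.smul_apply, star_smul, star_trivial, h2]
  · intro x
    have h := hA.dotProduct_mulVec_nonneg x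
    have : star x ⬝ᵥ (r • A) *ᵥ x = (r : ℂ) * (star x ⬝ᵥ A *ᵥ x) := by
      rw [show (r • A) = ((r : ℂ)) • A by ext i j; simp [Complex.real_smul]]
      rw [smul_mulVec, dotProduct_smul, smul_eq_mul]
    rw [this]
    have hr' : (0:ℂ) ≤ (r : ℂ) := by exact_mod_cast hr
    exact mul_nonneg hr' h

lemma posSemidef_sum {ι : Type*} (s : Finset ι) (f : ι → Matrix n n ℂ)
    (h : ∀ i ∈ s, (f i).PosSemidef) : (∑ i ∈ s, f i).PosSemidef :=
  Finset.sum_induction f _ (fun _ _ ha hb => ha.add hb) Matrix.PosSemidef.zero h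

lemma trace_transpose_mul_eq (A B : Matrix n n ℂ) : (Aᵀ * B).trace = (A * Bᵀ).trace := by
  rw [← Matrix.trace_transpose (Aᵀ * B), Matrix.transpose_mul, Matrix.transpose_transpose,
    trace_mul_comm]

end MainHelpers

/-- For a rank-1 projective measurement assemblage `M` with uniform weighting, the state
assemblage `σ x a = (1/d) • (M x a)ᵀ` (obtained from the maximally entangled state) is a
valid state assemblage with steerability at least `1 - T(M)/m`. -/
theorem steerability_transposed_assemblage_lower_bound {d m : ℕ} (hd : 0 < d) (hm : 0 < m)
    (M : Fin m → Fin d → Matrix (Fin d) (Fin d) ℂ)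
    (hM : IsAssemblage M) (hproj : IsRankOneProjective M) :
    IsStateAssemblage (fun x a => (1 / (d : ℝ)) • (M x a)ᵀ) ∧
    1 - (⨆ lam : Fin m → Fin d, specNorm (∑ x, M x (lam x))) / (m : ℝ)
      ≤ Steerability (fun _ => 1 / (m : ℝ)) (fun x a => (1 / (d : ℝ)) • (M x a)ᵀ) := by
  classical
  obtain ⟨hMpsd, hMsum⟩ := hM
  have hdR : (0:ℝ) < d := by exact_mod_cast hd
  have hmR : (0:ℝ) < m := by exact_mod_cast hm
  have hσpsd : ∀ (x : Fin m) (a : Fin d), ((1 / (d : ℝ)) • (M x a)ᵀ).PosSemidef := fun x a =>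
    posSemidef_smul_real (hMpsd x a).transpose (by positivity)
  have hσtr : ∀ x : Fin m, ∑ a, ((1 / (d : ℝ)) • (M x a)ᵀ).trace = 1 := by
    intro x
    have h1 : ∑ a, ((1 / (d : ℝ)) • (M x a)ᵀ).trace = (1/(d:ℝ)) • ∑ a, (M x a).trace := by
      rw [Finset.smul_sum]
      exact Finset.sum_congr rfl fun a _ => by rw [Matrix.trace_smul, Matrix.trace_transpose]
    have h2 : ∑ a, (M x a).trace = (d : ℂ) := by
      rw [← Matrix.trace_sum, hMsum x, Matrix.trace_one]
      simp
    rw [h1, h2, Complex.real_smul]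
    push_cast
    field_simp
  have hSA : IsStateAssemblage (fun x a => (1 / (d : ℝ)) • (M x a)ᵀ) := ⟨hσpsd, hσtr⟩
  refine ⟨hSA, ?_⟩
  -- PSD of 1 - M x a
  have hsub : ∀ (x : Fin m) (a : Fin d), ((1 : Matrix (Fin d) (Fin d) ℂ) - M x a).PosSemidef := by
    intro x a
    have he : (1 : Matrix (Fin d) (Fin d) ℂ) - M x a = ∑ b ∈ Finset.univ.erase a, M x b := by
      rw [← hMsum x, ← Finset.add_sum_erase _ (M x) (Finset.mem_univ a), add_sub_cancel_left]
    rw [he]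
    exact posSemidef_sum _ _ (fun b _ => hMpsd x b)
  -- witness for nonemptiness
  set c : ℝ := 1 / (d:ℝ)^(m+1) with hc
  set σ'₀ : (Fin m → Fin d) → Matrix (Fin d) (Fin d) ℂ := fun _ => c • (1 : Matrix (Fin d) (Fin d) ℂ)
    with hσ'₀
  have hcpos : (0:ℝ) ≤ c := by positivity
  have hσ'₀psd : ∀ lam, (σ'₀ lam).PosSemidef := fun _ =>
    posSemidef_smul_real Matrix.PosSemidef.one hcpos
  have hσ'₀tr : ∑ lam : Fin m → Fin d, (σ'₀ lam).trace = 1 := by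
    have h1 : ∀ lam : Fin m → Fin d, (σ'₀ lam).trace = ((c * d : ℝ) : ℂ) := by
      intro lam
      rw [hσ'₀]
      rw [Matrix.trace_smul, Matrix.trace_one, Fintype.card_fin]
      push_cast [Complex.real_smul]
      ring
    rw [Finset.sum_congr rfl (fun lam _ => h1 lam), Finset.sum_const, Finset.card_univ]
    rw [Fintype.card_fun]
    simp only [Fintype.card_fin, nsmul_eq_mul]
    rw [hc]
    push_cast
    have hdc : ((d:ℂ)) ≠ 0 := by exact_mod_cast hd.ne'
    field_simp
    ring
  set τ₀ : Fin m → Fin d → Matrix (Fin d) (Fin d) ℂ :=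
    fun x a => ∑ lam ∈ Finset.univ.filter (fun lam => lam x = a), σ'₀ lam with hτ₀
  have hτ₀SA : IsStateAssemblage τ₀ := by
    constructor
    · intro x a
      exact posSemidef_sum _ _ (fun lam _ => hσ'₀psd lam)
    · intro x
      have : ∑ a, (τ₀ x a).trace
          = ∑ a, ∑ lam ∈ Finset.univ.filter (fun lam => lam x = a), (σ'₀ lam).trace := by
        exact Finset.sum_congr rfl fun a _ => by rw [hτ₀, Matrix.trace_sum]
      rw [this, Finset.sum_fiberwise, hσ'₀tr]
  have hτ₀LHS : HasLHSModel τ₀ := ⟨σ'₀, hσ'₀psd, hσ'₀tr, fun x a => rfl⟩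
  haveI : Nonempty {τ : Fin m → Fin d → Matrix (Fin d) (Fin d) ℂ //
      IsStateAssemblage τ ∧ HasLHSModel τ} := ⟨⟨τ₀, hτ₀SA, hτ₀LHS⟩⟩
  unfold Steerability
  apply le_ciInf
  rintro ⟨τ, hτSA, σ', hσ'psd, hσ'tr, hτeq⟩
  simp only
  set T := ⨆ lam : Fin m → Fin d, specNorm (∑ x, M x (lam x)) with hT
  set t : Fin m → ℝ := fun x => ∑ a, (((M x a)ᵀ * τ x a).trace).re with htdef
  -- step 1 : pointwise bound from key1
  have hx : ∀ x : Fin m, 2 - 2 * t x ≤ ∑ a, traceNorm ((1 / (d : ℝ)) • (M x a)ᵀ - τ x a) := by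
    intro x
    have hkey : ∀ a : Fin d,
        2 * ((((M x a)ᵀ * ((1 / (d : ℝ)) • (M x a)ᵀ)).trace).re - (((M x a)ᵀ * τ x a).trace).re)
          ≤ traceNorm ((1 / (d : ℝ)) • (M x a)ᵀ - τ x a)
            + ((((1 / (d : ℝ)) • (M x a)ᵀ - τ x a)).trace).re := by
      intro a
      have hP : ((M x a)ᵀ).PosSemidef := (hMpsd x a).transpose
      have hP1 : ((1 : Matrix (Fin d) (Fin d) ℂ) - (M x a)ᵀ).PosSemidef := by
        have := (hsub x a).transpose
        rwa [Matrix.transpose_sub, Matrix.transpose_one] at this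
      have hXh : (((1 / (d : ℝ)) • (M x a)ᵀ - τ x a)).IsHermitian :=
        (hσpsd x a).1.sub (hτSA.1 x a).1
      have h := key1 hP hP1 hXh
      rwa [mul_sub, Matrix.trace_sub, Complex.sub_re] at h
    have hPσ : ∀ a : Fin d, (((M x a)ᵀ * ((1 / (d : ℝ)) • (M x a)ᵀ)).trace).re = 1/(d:ℝ) := by
      intro a
      rw [mul_smul_comm, Matrix.trace_smul]
      have hmm : (M x a)ᵀ * (M x a)ᵀ = (M x a)ᵀ := by
        rw [← Matrix.transpose_mul, (hproj x a).2.1]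
      rw [hmm, Matrix.trace_transpose, (hproj x a).2.2]
      simp [Complex.real_smul]
    have hsum := Finset.sum_le_sum (s := Finset.univ) (fun a _ => hkey a)
    have hL : ∑ a : Fin d,
        2 * ((((M x a)ᵀ * ((1 / (d : ℝ)) • (M x a)ᵀ)).trace).re - (((M x a)ᵀ * τ x a).trace).re)
        = 2 - 2 * t x := by
      rw [htdef]
      simp only [mul_sub, Finset.sum_sub_distrib, ← Finset.mul_sum]
      congr 1
      rw [Finset.sum_congr rfl (fun a _ => hPσ a), Finset.sum_const, Finset.card_univ,
        Fintype.card_fin, nsmul_eq_mul]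
      field_simp
    have hR : ∑ a : Fin d, (traceNorm ((1 / (d : ℝ)) • (M x a)ᵀ - τ x a)
          + ((((1 / (d : ℝ)) • (M x a)ᵀ - τ x a)).trace).re)
        = ∑ a, traceNorm ((1 / (d : ℝ)) • (M x a)ᵀ - τ x a) := by
      rw [Finset.sum_add_distrib]
      have hz : ∑ a : Fin d, ((((1 / (d : ℝ)) • (M x a)ᵀ - τ x a)).trace).re = 0 := by
        rw [← Complex.re_sum]
        have : ∑ a : Fin d, (((1 / (d : ℝ)) • (M x a)ᵀ - τ x a)).trace
            = ∑ a, ((1 / (d : ℝ)) • (M x a)ᵀ).trace - ∑ a, (τ x a).trace := by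
          rw [← Finset.sum_sub_distrib]
          exact Finset.sum_congr rfl fun a _ => Matrix.trace_sub _ _
        rw [this, hσtr x, hτSA.2 x]
        simp
      rw [hz, add_zero]
    rw [hL, hR] at hsum
    exact hsum
  -- step 2 : bound on sum of t
  have ht : ∑ x, t x ≤ T := by
    have h1 : ∀ x : Fin m, t x = ∑ lam : Fin m → Fin d, (((M x (lam x))ᵀ * σ' lam).trace).re := by
      intro x
      rw [htdef]
      calc ∑ a, (((M x a)ᵀ * τ x a).trace).re
          = ∑ a, ∑ lam ∈ Finset.univ.filter (fun lam => lam x = a),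
              (((M x a)ᵀ * σ' lam).trace).re := by
            refine Finset.sum_congr rfl fun a _ => ?_
            rw [hτeq x a, Finset.mul_sum, Matrix.trace_sum, Complex.re_sum]
        _ = ∑ a, ∑ lam ∈ Finset.univ.filter (fun lam => lam x = a),
              (((M x (lam x))ᵀ * σ' lam).trace).re := by
            refine Finset.sum_congr rfl fun a _ => Finset.sum_congr rfl fun lam hlam => ?_
            rw [(Finset.mem_filter.mp hlam).2]
        _ = ∑ lam : Fin m → Fin d, (((M x (lam x))ᵀ * σ' lam).trace).re :=
            Finset.sum_fiberwise _ _ _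
    have h2 : ∑ x, t x = ∑ lam : Fin m → Fin d, (((∑ x, M x (lam x))ᵀ * σ' lam).trace).re := by
      rw [Finset.sum_congr rfl (fun x _ => h1 x), Finset.sum_comm]
      refine Finset.sum_congr rfl fun lam _ => ?_
      rw [Matrix.transpose_sum, Finset.sum_mul, Matrix.trace_sum, Complex.re_sum]
    have h3 : ∀ lam : Fin m → Fin d, (((∑ x, M x (lam x))ᵀ * σ' lam).trace).re
        ≤ T * ((σ' lam).trace).re := by
      intro lam
      have hkey2 : (((∑ x, M x (lam x))ᵀ * σ' lam).trace).re
          ≤ specNorm (∑ x, M x (lam x)) * ((σ' lam).trace).re := by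
        rw [trace_transpose_mul_eq]
        have := key2 (∑ x, M x (lam x)) (hσ'psd lam).transpose
        rwa [Matrix.trace_transpose] at this
      have hle : specNorm (∑ x, M x (lam x)) ≤ T := by
        rw [hT]
        exact le_ciSup (Set.Finite.bddAbove
          (Set.finite_range (fun lam : Fin m → Fin d => specNorm (∑ x, M x (lam x))))) lam
      exact hkey2.trans (mul_le_mul_of_nonneg_right hle (trace_re_nonneg (hσ'psd lam)))
    calc ∑ x, t x = ∑ lam : Fin m → Fin d, (((∑ x, M x (lam x))ᵀ * σ' lam).trace).re := h2
      _ ≤ ∑ lam : Fin m → Fin d, T * ((σ' lam).trace).re :=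
          Finset.sum_le_sum fun lam _ => h3 lam
      _ = T * ((∑ lam : Fin m → Fin d, (σ' lam).trace)).re := by
          rw [Complex.re_sum, Finset.mul_sum]
      _ = T := by rw [hσ'tr]; simp
  -- final arithmetic
  have hmain : ∑ x : Fin m, (1/(m:ℝ)) * ∑ a, traceNorm ((1 / (d : ℝ)) • (M x a)ᵀ - τ x a)
      ≥ ∑ x : Fin m, (1/(m:ℝ)) * (2 - 2 * t x) :=
    Finset.sum_le_sum fun x _ => mul_le_mul_of_nonneg_left (hx x) (by positivity)
  have heq : ∑ x : Fin m, (1/(m:ℝ)) * (2 - 2 * t x) = 2 - 2 * (∑ x, t x) / m := by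
    rw [← Finset.mul_sum, Finset.sum_sub_distrib, Finset.sum_const, Finset.card_univ,
      Fintype.card_fin, nsmul_eq_mul, ← Finset.mul_sum]
    field_simp
  rw [heq] at hmain
  have hfinal : 1 - T / m ≤ (1/2) * (2 - 2 * (∑ x, t x) / m) := by
    have hdiv : (∑ x, t x) / (m:ℝ) ≤ T / m := (div_le_div_iff_of_pos_right hmR).mpr ht
    have e2 : (2 * ∑ x, t x) / (m:ℝ) = 2 * ((∑ x, t x) / m) := by ring
    linarith
  calc 1 - T / m ≤ (1/2) * (2 - 2 * (∑ x, t x) / m) := hfinal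
    _ ≤ (1/2) * ∑ x : Fin m, (1/(m:ℝ)) * ∑ a, traceNorm ((1 / (d : ℝ)) • (M x a)ᵀ - τ x a) := by
        linarith


end
end

section
/- Let M and N be measurement assemblages in dimension d with m settings and o = 2 outcomes (dichotomic measurements), and let p be a weighting. Then the weighted diamond distance is attained without entanglement and is given in closed form by D⋄(M,N) = ∑ x, p x · ‖M x 0 − N x 0‖_∞. -/
open Matrix Kronecker BigOperators ComplexOrder

noncomputable section

section Aux

variable {n : Type*} [Fintype n] [DecidableEq n]

noncomputable def sqrtH {A : Matrix n n ℂ} (hA : A.IsHermitian) : Matrix n n ℂ :=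
  hA.eigenvectorUnitary.1 *
      diagonal (((↑) : ℝ → ℂ) ∘ Real.sqrt ∘ hA.eigenvalues) *
      (star hA.eigenvectorUnitary : Matrix n n ℂ)

lemma traceNorm_eq_sqrtH (X : Matrix n n ℂ) :
    traceNorm X = (sqrtH (Matrix.posSemidef_conjTranspose_mul_self X).1).trace.re := rfl

lemma sqrtH_eq_cfc {A : Matrix n n ℂ} (hA : A.IsHermitian) : sqrtH hA = cfc Real.sqrt A := by
  rw [hA.cfc_eq, IsHermitian.cfc]; rfl

lemma Matrix.PosSemidef.eq_sqrtH_of_sq_eq {A B : Matrix n n ℂ} (hB : B.PosSemidef)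
    (hA : A.IsHermitian) (h : B ^ 2 = A) : B = sqrtH hA := by
  have hsa : IsSelfAdjoint B := hB.1
  rw [sqrtH_eq_cfc, ← h, ← cfc_comp_pow Real.sqrt 2 B Real.continuous_sqrt.continuousOn hsa]
  conv_lhs => rw [← cfc_id' ℝ B hsa]
  refine cfc_congr fun x hx => ?_
  rw [hB.1.spectrum_real_eq_range_eigenvalues] at hx
  obtain ⟨i, rfl⟩ := hx
  simp [Real.sqrt_sq (hB.eigenvalues_nonneg i)]

lemma exists_eq_conjTranspose_mul_self {A : Matrix n n ℂ} (hA : A.PosSemidef) :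
    ∃ C : Matrix n n ℂ, A = Cᴴ * C := by
  have hsa : IsSelfAdjoint A := hA.1
  refine ⟨cfc Real.sqrt A, ?_⟩
  have hC : (cfc Real.sqrt A)ᴴ = cfc Real.sqrt A := (cfc_predicate Real.sqrt A : IsSelfAdjoint _)
  rw [hC, ← cfc_mul Real.sqrt Real.sqrt A]
  conv_lhs => rw [← cfc_id' ℝ A hsa]
  refine cfc_congr fun x hx => ?_
  rw [hA.1.spectrum_real_eq_range_eigenvalues] at hx
  obtain ⟨i, rfl⟩ := hx
  simp [Real.mul_self_sqrt (hA.eigenvalues_nonneg i)]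

lemma sqrt_congr {A B : Matrix n n ℂ} (h : A = B) (hA : A.IsHermitian) (hB : B.IsHermitian) :
    sqrtH hA = sqrtH hB := by subst h; rfl

lemma traceNorm_neg (X : Matrix n n ℂ) : traceNorm (-X) = traceNorm X := by
  rw [traceNorm_eq_sqrtH, traceNorm_eq_sqrtH]
  rw [sqrt_congr (by simp) (Matrix.posSemidef_conjTranspose_mul_self (-X)).1
    (Matrix.posSemidef_conjTranspose_mul_self X).1]

lemma traceNorm_of_isHermitian {T : Matrix n n ℂ} (hT : T.IsHermitian) :
    traceNorm T = ∑ k, |hT.eigenvalues k| := by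
  set V : Matrix n n ℂ := (hT.eigenvectorUnitary : Matrix n n ℂ) with hVdef
  have hV : star V * V = 1 := Matrix.mem_unitaryGroup_iff'.mp hT.eigenvectorUnitary.2
  set D : Matrix n n ℂ := Matrix.diagonal (fun k => ((|hT.eigenvalues k| : ℝ) : ℂ)) with hD
  set D0 : Matrix n n ℂ := Matrix.diagonal (RCLike.ofReal ∘ hT.eigenvalues) with hD0
  have hspec : T = V * D0 * star V := hT.spectral_theorem
  have hBpsd : (V * D * star V).PosSemidef := by
    have : D.PosSemidef := Matrix.posSemidef_diagonal_iff.mpr fun k => by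
      rw [RCLike.nonneg_iff]
      simp [abs_nonneg]
    rw [Matrix.star_eq_conjTranspose]; exact this.mul_mul_conjTranspose_same V
  have hB2 : (V * D * star V) ^ 2 = Tᴴ * T := by
    have hDD : D * D = D0 * D0 := by
      rw [hD, hD0, Matrix.diagonal_mul_diagonal, Matrix.diagonal_mul_diagonal]
      refine congrArg Matrix.diagonal (funext fun k => ?_)
      simp only [Function.comp_apply]
      rw [← Complex.ofReal_mul, abs_mul_abs_self]
      norm_cast
    rw [hT.eq, pow_two]
    calc V * D * star V * (V * D * star V)
        = V * (D * ((star V * V) * (D * star V))) := by simp only [Matrix.mul_assoc]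
      _ = V * (D * D) * star V := by rw [hV, Matrix.one_mul]; simp only [Matrix.mul_assoc]
      _ = V * (D0 * D0) * star V := by rw [hDD]
      _ = V * (D0 * ((star V * V) * (D0 * star V))) := by
          rw [hV, Matrix.one_mul]; simp only [Matrix.mul_assoc]
      _ = V * D0 * star V * (V * D0 * star V) := by simp only [Matrix.mul_assoc]
      _ = T * T := by rw [← hspec]
  have hsqrt : V * D * star V = sqrtH (Matrix.posSemidef_conjTranspose_mul_self T).1 :=
    hBpsd.eq_sqrtH_of_sq_eq _ hB2
  rw [traceNorm_eq_sqrtH, ← hsqrt]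
  rw [Matrix.trace_mul_cycle, hV, Matrix.one_mul]
  simp [hD, Matrix.trace_diagonal]

lemma toEuclideanCLM_eigenvectorBasis {T : Matrix n n ℂ} (hT : T.IsHermitian) (i : n) :
    Matrix.toEuclideanCLM (𝕜 := ℂ) T (hT.eigenvectorBasis i) =
      (hT.eigenvalues i : ℂ) • hT.eigenvectorBasis i := by
  have key : Matrix.toEuclideanCLM (𝕜 := ℂ) T (hT.eigenvectorBasis i)
      = WithLp.toLp 2 (T *ᵥ (hT.eigenvectorBasis i).ofLp) := rfl
  rw [key, hT.mulVec_eigenvectorBasis, RCLike.real_smul_eq_coe_smul (K := ℂ),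
    WithLp.toLp_smul, WithLp.toLp_ofLp]
  rfl

lemma abs_eigenvalue_le_specNorm {T : Matrix n n ℂ} (hT : T.IsHermitian) (i : n) :
    |hT.eigenvalues i| ≤ specNorm T := by
  have h1 : ‖hT.eigenvectorBasis i‖ = 1 := hT.eigenvectorBasis.orthonormal.1 i
  have h2 : ‖Matrix.toEuclideanCLM (𝕜 := ℂ) T (hT.eigenvectorBasis i)‖ = |hT.eigenvalues i| := by
    rw [toEuclideanCLM_eigenvectorBasis hT i, norm_smul, h1, mul_one]
    simp [Complex.norm_real]
  calc |hT.eigenvalues i| = ‖Matrix.toEuclideanCLM (𝕜 := ℂ) T (hT.eigenvectorBasis i)‖ := h2.symm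
    _ ≤ ‖Matrix.toEuclideanCLM (𝕜 := ℂ) T‖ * ‖hT.eigenvectorBasis i‖ :=
        (Matrix.toEuclideanCLM (𝕜 := ℂ) T).le_opNorm _
    _ = specNorm T := by rw [h1, mul_one]; rfl

lemma specNorm_le_of_eigenvalues {T : Matrix n n ℂ} (hT : T.IsHermitian) {c : ℝ} (hc : 0 ≤ c)
    (h : ∀ i, |hT.eigenvalues i| ≤ c) : specNorm T ≤ c := by
  apply ContinuousLinearMap.opNorm_le_bound _ hc
  intro x
  set b := hT.eigenvectorBasis with hb
  set y := Matrix.toEuclideanCLM (𝕜 := ℂ) T x with hy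
  have hrepr : ∀ j, b.repr y j = (hT.eigenvalues j : ℂ) * b.repr x j := by
    intro j
    have hx : x = ∑ i, b.repr x i • b i := (b.sum_repr x).symm
    rw [hy]
    conv_lhs => rw [hx]
    rw [map_sum, map_sum, WithLp.ofLp_sum, Finset.sum_apply]
    have : ∀ i, b.repr (Matrix.toEuclideanCLM (𝕜 := ℂ) T (b.repr x i • b i)) j
        = b.repr x i * ((hT.eigenvalues i : ℂ) * (b.repr (b i)) j) := by
      intro i
      rw [_root_.map_smul, toEuclideanCLM_eigenvectorBasis hT i, _root_.map_smul,
        _root_.map_smul]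
      simp [mul_assoc, ← hb]
    rw [Finset.sum_congr rfl (fun i _ => this i)]
    simp only [OrthonormalBasis.repr_self, EuclideanSpace.single_apply]
    rw [Finset.sum_eq_single j]
    · simp [mul_comm]
    · intro i _ hij
      simp [Ne.symm hij]
    · simp
  have hny : ‖y‖ = Real.sqrt (∑ j, ‖b.repr y j‖ ^ 2) := by
    rw [← b.repr.norm_map y, EuclideanSpace.norm_eq]
  have hnx : ‖x‖ = Real.sqrt (∑ j, ‖b.repr x j‖ ^ 2) := by
    rw [← b.repr.norm_map x, EuclideanSpace.norm_eq]
  rw [hny, hnx]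
  rw [← Real.sqrt_sq hc, ← Real.sqrt_mul (by positivity)]
  apply Real.sqrt_le_sqrt
  rw [Finset.mul_sum]
  apply Finset.sum_le_sum
  intro j _
  rw [hrepr j]
  rw [norm_mul]
  have h0 : ‖((hT.eigenvalues j : ℝ) : ℂ)‖ = |hT.eigenvalues j| := by
    simp [Complex.norm_real]
  rw [h0]
  calc (|hT.eigenvalues j| * ‖b.repr x j‖) ^ 2
      = |hT.eigenvalues j| ^ 2 * ‖b.repr x j‖ ^ 2 := by ring
    _ ≤ c ^ 2 * ‖b.repr x j‖ ^ 2 := by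
        apply mul_le_mul_of_nonneg_right _ (by positivity)
        exact pow_le_pow_left₀ (abs_nonneg _) (h j) 2

lemma trace_psd_nonneg {P : Matrix n n ℂ} (hP : P.PosSemidef) : 0 ≤ P.trace := by
  exact hP.trace_nonneg

lemma trace_mul_psd_nonneg {A B : Matrix n n ℂ} (hA : A.PosSemidef) (hB : B.PosSemidef) :
    0 ≤ (A * B).trace := by
  obtain ⟨C, rfl⟩ := exists_eq_conjTranspose_mul_self hA
  rw [Matrix.mul_assoc, Matrix.trace_mul_comm]
  exact trace_psd_nonneg (hB.mul_mul_conjTranspose_same C)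

lemma kron_conjTranspose {l m o p : Type*} (A : Matrix l m ℂ) (B : Matrix o p ℂ) :
    (A ⊗ₖ B)ᴴ = Aᴴ ⊗ₖ Bᴴ := by
  ext ⟨i, j⟩ ⟨i', j'⟩
  simp [Matrix.conjTranspose_apply, Matrix.kroneckerMap_apply, star_mul', mul_comm]

end Aux


section Aux2

variable {d : ℕ}

lemma ptrace1_kron_one_mul (Δ : Matrix (Fin d) (Fin d) ℂ)
    (ρ : Matrix (Fin d × Fin d) (Fin d × Fin d) ℂ) :
    ptrace1 ((Δ ⊗ₖ (1 : Matrix (Fin d) (Fin d) ℂ)) * ρ) =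
      Matrix.of (fun j j' => ∑ i, ∑ i', Δ i i' * ρ (i', j) (i, j')) := by
  ext j j'
  simp only [ptrace1, Matrix.of_apply, Matrix.mul_apply, Fintype.sum_prod_type,
    Matrix.kroneckerMap_apply, Matrix.one_apply, mul_ite, mul_one, mul_zero, ite_mul, zero_mul]
  congr 1
  funext i
  rw [Finset.sum_comm]
  simp [Finset.sum_ite_eq]

lemma ptrace1_isHermitian {Δ : Matrix (Fin d) (Fin d) ℂ}
    {ρ : Matrix (Fin d × Fin d) (Fin d × Fin d) ℂ} (hΔ : Δ.IsHermitian) (hρ : ρ.IsHermitian) :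
    (ptrace1 ((Δ ⊗ₖ (1 : Matrix (Fin d) (Fin d) ℂ)) * ρ)).IsHermitian := by
  rw [ptrace1_kron_one_mul]
  refine Matrix.IsHermitian.ext fun j j' => ?_
  simp only [Matrix.of_apply, star_sum, star_mul']
  rw [Finset.sum_comm]
  refine Finset.sum_congr rfl fun i _ => Finset.sum_congr rfl fun i' _ => ?_
  rw [hρ.apply, hΔ.apply, mul_comm]

lemma trace_ptrace1_mul (Δ W : Matrix (Fin d) (Fin d) ℂ)
    (ρ : Matrix (Fin d × Fin d) (Fin d × Fin d) ℂ) :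
    (ptrace1 ((Δ ⊗ₖ (1 : Matrix (Fin d) (Fin d) ℂ)) * ρ) * W).trace
      = ((Δ ⊗ₖ W) * ρ).trace := by
  rw [ptrace1_kron_one_mul]
  simp only [Matrix.trace, Matrix.diag_apply, Matrix.mul_apply, Matrix.of_apply,
    Matrix.kroneckerMap_apply, Fintype.sum_prod_type, Finset.sum_mul]
  have key : ∀ G : Fin d → Fin d → Fin d → Fin d → ℂ,
      (∑ j, ∑ j', ∑ i, ∑ i', G j j' i i') = ∑ i, ∑ j, ∑ i', ∑ j', G j' j i i' := by
    intro G
    calc (∑ j, ∑ j', ∑ i, ∑ i', G j j' i i')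
        = ∑ p : (Fin d × Fin d) × Fin d × Fin d, G p.1.1 p.1.2 p.2.1 p.2.2 := by
          simp only [Fintype.sum_prod_type]
      _ = ∑ q : (Fin d × Fin d) × Fin d × Fin d, G q.2.2 q.1.2 q.1.1 q.2.1 :=
          (Fintype.sum_equiv
            ⟨fun q => ((q.2.2, q.1.2), q.1.1, q.2.1), fun p => ((p.2.1, p.1.2), p.2.2, p.1.1),
              fun q => rfl, fun p => rfl⟩ (fun q => G q.2.2 q.1.2 q.1.1 q.2.1)
            (fun p => G p.1.1 p.1.2 p.2.1 p.2.2) (fun q => rfl)).symm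
      _ = ∑ i, ∑ j, ∑ i', ∑ j', G j' j i i' := by simp only [Fintype.sum_prod_type]
  rw [key (fun j j' i i' => Δ i i' * ρ (i', j) (i, j') * W j' j)]
  exact Finset.sum_congr rfl fun _ _ => Finset.sum_congr rfl fun _ _ =>
    Finset.sum_congr rfl fun _ _ => Finset.sum_congr rfl fun _ _ => by ring

end Aux2


section Aux3

variable {d : ℕ}

lemma traceNorm_ptrace1_le {Δ : Matrix (Fin d) (Fin d) ℂ} (hΔ : Δ.IsHermitian)
    {ρ : Matrix (Fin d × Fin d) (Fin d × Fin d) ℂ} (hρ : IsDensityMatrix ρ) :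
    traceNorm (ptrace1 ((Δ ⊗ₖ (1 : Matrix (Fin d) (Fin d) ℂ)) * ρ)) ≤ specNorm Δ := by
  set T := ptrace1 ((Δ ⊗ₖ (1 : Matrix (Fin d) (Fin d) ℂ)) * ρ) with hTdef
  have hT : T.IsHermitian := ptrace1_isHermitian hΔ hρ.1.1
  set c := specNorm Δ with hcdef
  set μ : Fin d → ℝ := hT.eigenvalues with hμ
  set s : Fin d → ℝ := fun k => if 0 ≤ μ k then 1 else -1 with hs
  have hsabs : ∀ k, μ k * s k = |μ k| := by
    intro k
    by_cases h : 0 ≤ μ k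
    · simp [hs, h, abs_of_nonneg h]
    · simp [hs, h, abs_of_neg (lt_of_not_ge h)]
  set V : Matrix (Fin d) (Fin d) ℂ := (hT.eigenvectorUnitary : Matrix (Fin d) (Fin d) ℂ)
    with hVdef
  have hVu : star V * V = 1 := Matrix.mem_unitaryGroup_iff'.mp hT.eigenvectorUnitary.2
  have hVu' : V * star V = 1 := Matrix.mem_unitaryGroup_iff.mp hT.eigenvectorUnitary.2
  set E : Matrix (Fin d) (Fin d) ℂ := Matrix.diagonal (fun k => (s k : ℂ)) with hE
  set W : Matrix (Fin d) (Fin d) ℂ := V * E * star V with hW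
  -- step 1 : trace (T * W) = ∑ k, |μ k|
  have hTW : (T * W).trace = ((∑ k, |μ k| : ℝ) : ℂ) := by
    have hspec : T = V * Matrix.diagonal (RCLike.ofReal ∘ μ) * star V := hT.spectral_theorem
    have hmul : T * W = V * Matrix.diagonal (fun k => ((|μ k| : ℝ) : ℂ)) * star V := by
      rw [hspec, hW]
      calc V * Matrix.diagonal (RCLike.ofReal ∘ μ) * star V * (V * E * star V)
          = V * (Matrix.diagonal (RCLike.ofReal ∘ μ) * ((star V * V) * (E * star V))) := by
            simp only [Matrix.mul_assoc]
        _ = V * (Matrix.diagonal (RCLike.ofReal ∘ μ) * E) * star V := by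
            rw [hVu, Matrix.one_mul]; simp only [Matrix.mul_assoc]
        _ = V * Matrix.diagonal (fun k => ((|μ k| : ℝ) : ℂ)) * star V := by
            rw [hE, Matrix.diagonal_mul_diagonal]
            refine congrArg (fun X => V * X * star V) (congrArg Matrix.diagonal
              (funext fun k => ?_))
            simp only [Function.comp_apply]
            have hcoe : (RCLike.ofReal (μ k) : ℂ) = ((μ k : ℝ) : ℂ) := rfl
            rw [hcoe, ← Complex.ofReal_mul, hsabs k]
    rw [hmul, Matrix.trace_mul_cycle, hVu, Matrix.one_mul, Matrix.trace_diagonal]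
    push_cast
    rfl
  -- step 2 : the PSD sandwich
  set U : Matrix (Fin d) (Fin d) ℂ := (hΔ.eigenvectorUnitary : Matrix (Fin d) (Fin d) ℂ)
    with hUdef
  have hUu : star U * U = 1 := Matrix.mem_unitaryGroup_iff'.mp hΔ.eigenvectorUnitary.2
  have hUu' : U * star U = 1 := Matrix.mem_unitaryGroup_iff.mp hΔ.eigenvectorUnitary.2
  set lam : Fin d → ℝ := hΔ.eigenvalues with hlam
  set Z : Matrix (Fin d × Fin d) (Fin d × Fin d) ℂ := U ⊗ₖ V with hZ
  have hZstar : star Z = (star U) ⊗ₖ (star V) := by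
    rw [hZ, Matrix.star_eq_conjTranspose, Matrix.star_eq_conjTranspose,
      Matrix.star_eq_conjTranspose, kron_conjTranspose]
  have hZu : Z * star Z = 1 := by
    rw [hZstar, hZ, ← Matrix.mul_kronecker_mul, hUu', hVu', Matrix.one_kronecker_one]
  have hkron : Δ ⊗ₖ W = Z * Matrix.diagonal (fun p : Fin d × Fin d =>
      ((lam p.1 * s p.2 : ℝ) : ℂ)) * star Z := by
    have hΔspec : Δ = U * Matrix.diagonal (RCLike.ofReal ∘ lam) * star U :=
      hΔ.spectral_theorem
    rw [hZstar, hZ]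
    conv_lhs => rw [hΔspec, hW]
    rw [Matrix.mul_kronecker_mul, Matrix.mul_kronecker_mul, hE,
      Matrix.diagonal_kronecker_diagonal]
    refine congrArg (fun X => (U ⊗ₖ V) * X * ((star U) ⊗ₖ (star V)))
      (congrArg Matrix.diagonal (funext fun p => ?_))
    simp only [Function.comp_apply]
    have hcoe : (RCLike.ofReal (lam p.1) : ℂ) = ((lam p.1 : ℝ) : ℂ) := rfl
    rw [hcoe, ← Complex.ofReal_mul]
  have habslam : ∀ i, |lam i| ≤ c := fun i => abs_eigenvalue_le_specNorm hΔ i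
  have hpsd : ((c : ℂ) • (1 : Matrix (Fin d × Fin d) (Fin d × Fin d) ℂ) - Δ ⊗ₖ W).PosSemidef := by
    have h1 : (c : ℂ) • (1 : Matrix (Fin d × Fin d) (Fin d × Fin d) ℂ)
        = Z * ((c : ℂ) • 1) * star Z := by
      rw [Matrix.mul_smul, Matrix.smul_mul, Matrix.mul_one, hZu]
    have h2 : ((c : ℂ) • (1 : Matrix (Fin d × Fin d) (Fin d × Fin d) ℂ) - Δ ⊗ₖ W)
        = Z * Matrix.diagonal (fun p : Fin d × Fin d => ((c - lam p.1 * s p.2 : ℝ) : ℂ))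
          * star Z := by
      rw [hkron, h1, ← Matrix.sub_mul, ← Matrix.mul_sub]
      have : (c : ℂ) • (1 : Matrix (Fin d × Fin d) (Fin d × Fin d) ℂ)
          - Matrix.diagonal (fun p : Fin d × Fin d => ((lam p.1 * s p.2 : ℝ) : ℂ))
          = Matrix.diagonal (fun p : Fin d × Fin d => ((c - lam p.1 * s p.2 : ℝ) : ℂ)) := by
        ext p q
        by_cases hpq : p = q
        · subst hpq
          simp only [Matrix.sub_apply, Matrix.smul_apply, Matrix.one_apply_eq,
            Matrix.diagonal_apply_eq, smul_eq_mul, mul_one]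
          push_cast
          ring
        · simp [Matrix.sub_apply, Matrix.smul_apply, Matrix.one_apply_ne hpq,
            Matrix.diagonal_apply_ne _ hpq]
      rw [this]
    rw [h2]
    have hdiag : (Matrix.diagonal (fun p : Fin d × Fin d =>
        ((c - lam p.1 * s p.2 : ℝ) : ℂ))).PosSemidef := by
      refine Matrix.posSemidef_diagonal_iff.mpr fun p => ?_
      rw [Complex.zero_le_real]
      have h3 : lam p.1 * s p.2 ≤ |lam p.1| := by
        calc lam p.1 * s p.2 ≤ |lam p.1 * s p.2| := le_abs_self _
          _ = |lam p.1| * |s p.2| := abs_mul _ _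
          _ = |lam p.1| := by
              by_cases h : 0 ≤ μ p.2 <;> simp [hs, h]
      linarith [habslam p.1]
    have := hdiag.mul_mul_conjTranspose_same Z
    rwa [← Matrix.star_eq_conjTranspose] at this
  -- step 3 : conclude
  have htrace : 0 ≤ ((((c : ℂ) • (1 : Matrix (Fin d × Fin d) (Fin d × Fin d) ℂ) - Δ ⊗ₖ W)
      * ρ)).trace := trace_mul_psd_nonneg hpsd hρ.1
  have hexp : ((((c : ℂ) • (1 : Matrix (Fin d × Fin d) (Fin d × Fin d) ℂ) - Δ ⊗ₖ W)
      * ρ)).trace = ((c - ∑ k, |μ k| : ℝ) : ℂ) := by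
    rw [Matrix.sub_mul, Matrix.trace_sub, Matrix.smul_mul, Matrix.one_mul, Matrix.trace_smul,
      hρ.2, ← trace_ptrace1_mul, ← hTdef, hTW]
    simp only [smul_eq_mul, mul_one]
    push_cast
    ring
  rw [hexp, Complex.zero_le_real] at htrace
  have hsum : traceNorm T = ∑ k, |μ k| := traceNorm_of_isHermitian hT
  rw [hsum]
  linarith [htrace]

end Aux3


section Aux4

variable {d : ℕ}

lemma ptrace1_neg (X : Matrix (Fin d × Fin d) (Fin d × Fin d) ℂ) :
    ptrace1 (-X) = -(ptrace1 X) := by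
  ext j j'
  simp [ptrace1, Finset.sum_neg_distrib]

lemma traceNorm_diagonal_real {n : Type*} [Fintype n] [DecidableEq n] (f : n → ℝ) :
    traceNorm (Matrix.diagonal (fun k => ((f k : ℝ) : ℂ))) = ∑ k, |f k| := by
  have hpsd : (Matrix.diagonal (fun k => ((|f k| : ℝ) : ℂ))).PosSemidef :=
    Matrix.posSemidef_diagonal_iff.mpr fun k => by
      rw [Complex.zero_le_real]; exact abs_nonneg _
  have hsq : (Matrix.diagonal (fun k => ((|f k| : ℝ) : ℂ))) ^ 2
      = (Matrix.diagonal (fun k => ((f k : ℝ) : ℂ)))ᴴ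
        * (Matrix.diagonal (fun k => ((f k : ℝ) : ℂ))) := by
    rw [pow_two, Matrix.diagonal_conjTranspose, Matrix.diagonal_mul_diagonal,
      Matrix.diagonal_mul_diagonal]
    refine congrArg Matrix.diagonal (funext fun k => ?_)
    simp only [Pi.star_apply, RCLike.star_def, Complex.conj_ofReal]
    rw [← Complex.ofReal_mul, ← Complex.ofReal_mul, abs_mul_abs_self]
  rw [traceNorm_eq_sqrtH, ← hpsd.eq_sqrtH_of_sq_eq (Matrix.posSemidef_conjTranspose_mul_self _).1 hsq, Matrix.trace_diagonal]
  rw [Complex.re_sum]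
  exact Finset.sum_congr rfl fun k _ => Complex.ofReal_re _

lemma exists_density_attains (hd : 0 < d) {Δ : Matrix (Fin d) (Fin d) ℂ}
    (hΔ : Δ.IsHermitian) :
    ∃ ρ : Matrix (Fin d × Fin d) (Fin d × Fin d) ℂ, IsDensityMatrix ρ ∧
      traceNorm (ptrace1 ((Δ ⊗ₖ (1 : Matrix (Fin d) (Fin d) ℂ)) * ρ)) = specNorm Δ := by
  obtain ⟨i₀, -, hmax⟩ := Finset.exists_max_image Finset.univ
    (fun i => |hΔ.eigenvalues i|) ⟨⟨0, hd⟩, Finset.mem_univ _⟩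
  have hspec_eq : specNorm Δ = |hΔ.eigenvalues i₀| :=
    le_antisymm (specNorm_le_of_eigenvalues hΔ (abs_nonneg _)
      (fun i => hmax i (Finset.mem_univ i))) (abs_eigenvalue_le_specNorm hΔ i₀)
  set L : ℝ := hΔ.eigenvalues i₀ with hL
  set z : Fin d := ⟨0, hd⟩ with hz
  set v : Fin d → ℂ := (WithLp.equiv 2 (Fin d → ℂ)) (hΔ.eigenvectorBasis i₀) with hv
  set w : Fin d → ℂ := Pi.single z 1 with hw
  set u : Fin d × Fin d → ℂ := fun q => v q.1 * w q.2 with hu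
  set ρ : Matrix (Fin d × Fin d) (Fin d × Fin d) ℂ :=
    Matrix.of (fun q q' => u q * star (u q')) with hρ
  have hvv : ∑ k, star (v k) * v k = 1 := by
    have h := Matrix.mem_unitaryGroup_iff'.mp hΔ.eigenvectorUnitary.2
    have h2 := congrFun (congrFun h i₀) i₀
    have h3 : ∀ k, (hΔ.eigenvectorUnitary : Matrix (Fin d) (Fin d) ℂ) k i₀ = v k := fun k =>
      Matrix.IsHermitian.eigenvectorUnitary_apply hΔ k i₀
    rw [Matrix.mul_apply] at h2
    simp only [Matrix.star_apply, h3, Matrix.one_apply_eq] at h2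
    exact h2
  have hww : ∑ k, star (w k) * w k = 1 := by
    rw [hw]
    rw [Finset.sum_eq_single z]
    · simp
    · intro k _ hk
      simp [Pi.single_apply, hk]
    · simp
  have hmv : ∀ i, ∑ i', Δ i i' * v i' = (L : ℂ) * v i := by
    intro i
    have h := congrFun (hΔ.mulVec_eigenvectorBasis i₀) i
    simpa [Matrix.mulVec, dotProduct, Complex.real_smul, hv, hL] using h
  have hdens : IsDensityMatrix ρ := by
    refine ⟨Matrix.PosSemidef.of_dotProduct_mulVec_nonneg ?_ ?_, ?_⟩
    · ext q q'
      simp only [Matrix.conjTranspose_apply, hρ, Matrix.of_apply, star_mul', star_star]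
      ring
    · intro x
      have hkey : star x ⬝ᵥ ρ *ᵥ x
          = (∑ q, star (x q) * u q) * (∑ q, star (u q) * x q) := by
        simp only [dotProduct, Matrix.mulVec, hρ, Matrix.of_apply]
        rw [Finset.sum_mul_sum]
        simp only [Pi.star_apply]
        refine Finset.sum_congr rfl fun q _ => ?_
        rw [Finset.mul_sum]
        refine Finset.sum_congr rfl fun q' _ => ?_
        simp only [hu, star_mul']
        ring
      have hstar : (∑ q, star (x q) * u q) = star (∑ q, star (u q) * x q) := by
        rw [star_sum]
        refine Finset.sum_congr rfl fun q _ => ?_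
        rw [star_mul', star_star]
        exact mul_comm _ _
      rw [hkey, hstar]
      exact star_mul_self_nonneg _
    · rw [Matrix.trace]
      simp only [Matrix.diag_apply, hρ, Matrix.of_apply]
      have : ∀ q : Fin d × Fin d, u q * star (u q)
          = (star (v q.1) * v q.1) * (star (w q.2) * w q.2) := by
        intro q
        simp only [hu, star_mul']
        ring
      have hfactor : ∑ q : Fin d × Fin d, (star (v q.1) * v q.1) * (star (w q.2) * w q.2)
          = (∑ i, star (v i) * v i) * (∑ j, star (w j) * w j) := by
        rw [Finset.sum_mul_sum]
        exact Fintype.sum_prod_type _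
      rw [Finset.sum_congr rfl fun q _ => this q, hfactor, hvv, hww, one_mul]
  have hTeq : ptrace1 ((Δ ⊗ₖ (1 : Matrix (Fin d) (Fin d) ℂ)) * ρ)
      = Matrix.diagonal (fun k => (((Pi.single z L : Fin d → ℝ) k : ℝ) : ℂ)) := by
    rw [ptrace1_kron_one_mul]
    ext j j'
    have h1 : ∀ i, ∑ i', Δ i i' * ρ (i', j) (i, j')
        = (w j * star (w j')) * (star (v i) * ((L : ℂ) * v i)) := by
      intro i
      calc ∑ i', Δ i i' * ρ (i', j) (i, j')
          = (w j * star (w j') * star (v i)) * ∑ i', Δ i i' * v i' := by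
            rw [Finset.mul_sum]
            refine Finset.sum_congr rfl fun i' _ => ?_
            simp only [hρ, Matrix.of_apply, hu, star_mul']
            ring
        _ = (w j * star (w j')) * (star (v i) * ((L : ℂ) * v i)) := by
            rw [hmv i]; ring
    rw [Matrix.of_apply, Finset.sum_congr rfl fun i _ => h1 i]
    have h2 : ∑ i, (w j * star (w j')) * (star (v i) * ((L : ℂ) * v i))
        = (w j * star (w j')) * (L : ℂ) := by
      rw [← Finset.mul_sum]
      congr 1
      calc ∑ i, star (v i) * ((L : ℂ) * v i) = (L : ℂ) * ∑ i, star (v i) * v i := by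
            rw [Finset.mul_sum]
            exact Finset.sum_congr rfl fun i _ => by ring
        _ = (L : ℂ) := by rw [hvv, mul_one]
    rw [h2]
    by_cases hjz : j = z
    · by_cases hjz' : j' = z
      · subst hjz; subst hjz'
        simp [hw, Matrix.diagonal_apply_eq, Pi.single_apply]
      · subst hjz
        rw [Matrix.diagonal_apply_ne _ (fun h => hjz' h.symm)]
        simp [hw, Pi.single_apply, hjz']
    · rw [hw]
      have : (Pi.single z 1 : Fin d → ℂ) j = 0 := by simp [Pi.single_apply, hjz]
      rw [this, zero_mul, zero_mul]
      by_cases hjj : j = j'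
      · subst hjj
        rw [Matrix.diagonal_apply_eq]
        simp [Pi.single_apply, hjz]
      · rw [Matrix.diagonal_apply_ne _ hjj]
  refine ⟨ρ, hdens, ?_⟩
  rw [hTeq, traceNorm_diagonal_real, hspec_eq]
  rw [Finset.sum_eq_single z]
  · simp [hL]
  · intro k _ hk
    simp [Pi.single_apply, hk]
  · simp

lemma key_sup (hd : 0 < d) (M N : Fin 2 → Matrix (Fin d) (Fin d) ℂ)
    (hM : ∀ a, (M a).PosSemidef) (hN : ∀ a, (N a).PosSemidef)
    (hM1 : ∑ a, M a = 1) (hN1 : ∑ a, N a = 1) :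
    (⨆ ρ : {ρ : Matrix (Fin d × Fin d) (Fin d × Fin d) ℂ // IsDensityMatrix ρ},
      ∑ a, traceNorm (ptrace1 (((M a - N a) ⊗ₖ (1 : Matrix (Fin d) (Fin d) ℂ)) * ρ.1)))
      = 2 * specNorm (M 0 - N 0) := by
  set Δ := M 0 - N 0 with hΔdef
  have hΔ : Δ.IsHermitian := ((hM 0).1).sub ((hN 0).1)
  have hneg : M 1 - N 1 = -Δ := by
    have h1 : M 0 + M 1 = 1 := by rw [← hM1, Fin.sum_univ_two]
    have h2 : N 0 + N 1 = 1 := by rw [← hN1, Fin.sum_univ_two]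
    have h3 : M 1 = 1 - M 0 := by rw [← h1]; abel
    have h4 : N 1 = 1 - N 0 := by rw [← h2]; abel
    rw [h3, h4, hΔdef]
    abel
  have hpt : ∀ ρ : Matrix (Fin d × Fin d) (Fin d × Fin d) ℂ,
      (∑ a, traceNorm (ptrace1 (((M a - N a) ⊗ₖ (1 : Matrix (Fin d) (Fin d) ℂ)) * ρ)))
        = 2 * traceNorm (ptrace1 ((Δ ⊗ₖ (1 : Matrix (Fin d) (Fin d) ℂ)) * ρ)) := by
    intro ρ
    rw [Fin.sum_univ_two, hneg, ← hΔdef]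
    have hkneg : ((-Δ) ⊗ₖ (1 : Matrix (Fin d) (Fin d) ℂ)) * ρ = -((Δ ⊗ₖ 1) * ρ) := by
      have : (-Δ) ⊗ₖ (1 : Matrix (Fin d) (Fin d) ℂ) = -(Δ ⊗ₖ 1) := by
        ext q q'
        simp [Matrix.kroneckerMap_apply]
      rw [this, Matrix.neg_mul]
    rw [hkneg, ptrace1_neg, traceNorm_neg]
    ring
  obtain ⟨ρ₀, hρ₀, hval⟩ := exists_density_attains hd hΔ
  have hub : ∀ ρ : {ρ : Matrix (Fin d × Fin d) (Fin d × Fin d) ℂ // IsDensityMatrix ρ},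
      (∑ a, traceNorm (ptrace1 (((M a - N a) ⊗ₖ (1 : Matrix (Fin d) (Fin d) ℂ)) * ρ.1)))
        ≤ 2 * specNorm Δ := by
    intro ρ
    rw [hpt ρ.1]
    have := traceNorm_ptrace1_le hΔ ρ.2
    linarith
  haveI : Nonempty {ρ : Matrix (Fin d × Fin d) (Fin d × Fin d) ℂ // IsDensityMatrix ρ} :=
    ⟨⟨ρ₀, hρ₀⟩⟩
  apply le_antisymm
  · exact ciSup_le hub
  · have hle := le_ciSup (f := fun ρ : {ρ : Matrix (Fin d × Fin d) (Fin d × Fin d) ℂ //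
        IsDensityMatrix ρ} =>
        ∑ a, traceNorm (ptrace1 (((M a - N a) ⊗ₖ (1 : Matrix (Fin d) (Fin d) ℂ)) * ρ.1)))
      ⟨2 * specNorm Δ, Set.forall_mem_range.mpr hub⟩ ⟨ρ₀, hρ₀⟩
    calc 2 * specNorm Δ
        = ∑ a, traceNorm (ptrace1 (((M a - N a) ⊗ₖ (1 : Matrix (Fin d) (Fin d) ℂ)) * ρ₀)) := by
          rw [hpt ρ₀, hval]
      _ ≤ _ := hle

end Aux4

/-- For dichotomic measurement assemblages the weighted diamond distance is given in closed
form by the spectral norm: `D⋄(M,N) = ∑ x, p x · ‖M x 0 − N x 0‖_∞`. -/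
theorem diamond_distance_dichotomic {d m : ℕ}
    (M N : Fin m → Fin 2 → Matrix (Fin d) (Fin d) ℂ)
    (hM : IsAssemblage M) (hN : IsAssemblage N)
    (p : Fin m → ℝ) (hp : IsWeighting p) :
    Ddiamond p M N = ∑ x, p x * specNorm (M x 0 - N x 0) := by
  rcases Nat.eq_zero_or_pos d with hd | hd
  · subst hd
    haveI hempty : IsEmpty {ρ : Matrix (Fin 0 × Fin 0) (Fin 0 × Fin 0) ℂ //
        IsDensityMatrix ρ} := by
      constructor
      rintro ⟨ρ, hρ, hρt⟩
      have htr : ρ.trace = 0 := by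
        rw [Matrix.trace]
        apply Finset.sum_eq_zero
        rintro ⟨⟨i, hi⟩, -⟩ -
        exact absurd hi (Nat.not_lt_zero i)
      rw [htr] at hρt
      exact zero_ne_one hρt
    have hzero : ∀ X : Matrix (Fin 0) (Fin 0) ℂ, specNorm X = 0 := by
      intro X
      have hX : X = 0 := by
        ext i j
        exact absurd i.2 (Nat.not_lt_zero i.1)
      rw [hX, specNorm, map_zero, norm_zero]
    rw [Ddiamond]
    simp only [Real.iSup_of_isEmpty, mul_zero, Finset.sum_const_zero]
    rw [Finset.sum_congr rfl fun x _ => by rw [hzero (M x 0 - N x 0), mul_zero]]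
    simp
  · have hx : ∀ x : Fin m,
        (⨆ ρ : {ρ : Matrix (Fin d × Fin d) (Fin d × Fin d) ℂ // IsDensityMatrix ρ},
          ∑ a, traceNorm (ptrace1 (((M x a - N x a) ⊗ₖ (1 : Matrix (Fin d) (Fin d) ℂ)) * ρ.1)))
          = 2 * specNorm (M x 0 - N x 0) := fun x =>
      key_sup hd (M x) (N x) (fun a => hM.1 x a) (fun a => hN.1 x a) (hM.2 x) (hN.2 x)
    rw [Ddiamond, Finset.sum_congr rfl fun x _ => by rw [hx x]]
    rw [Finset.mul_sum]
    exact Finset.sum_congr rfl fun x _ => by ring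

end
end
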